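/- Let k be a subring of ℂ containing 2cos(2π/m) and 1/m for some integer m ≥ 3. Then for all integers a, b with 1 ≤ a < b ≤ ⌊m/2⌋, the element 4cos(aπ/m)² − 4cos(bπ/m)² is a unit of k. -/

import Mathlib

open Real Finset

lemma two_cos_add_rec' (x y : ℝ) :
    2 * Real.cos (x + y) = (2 * Real.cos y) * (2 * Real.cos x) - 2 * Real.cos (x - y) := by
  have h1 := Real.cos_add x y
  have h2 := Real.cos_sub x y
  nlinarith [h1, h2]

lemma two_cos_diff_sq' (A B : ℝ) :
    (2 * Real.cos A - 2 * Real.cos B) ^ 2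
      = (2 - 2 * Real.cos (B - A)) * (2 - 2 * Real.cos (A + B)) := by
  rw [Real.cos_sub, Real.cos_add]
  linear_combination (4 * Real.sin B ^ 2) * (Real.sin_sq_add_cos_sq A)
    + (4 - 4 * Real.cos A ^ 2) * (Real.sin_sq_add_cos_sq B)

theorem four_cos_sq_sub_unit (m : ℕ) (hm : 3 ≤ m) (k : Subring ℂ)
    (hcos : ((2 * Real.cos (2 * Real.pi / m) : ℝ) : ℂ) ∈ k)
    (hinv : ((m : ℂ))⁻¹ ∈ k) (a b : ℕ)
    (ha : 1 ≤ a) (hab : a < b) (hb : b ≤ m / 2) :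
    ((4 * Real.cos (a * Real.pi / m) ^ 2 - 4 * Real.cos (b * Real.pi / m) ^ 2 : ℝ) : ℂ) ∈ k ∧
    ∃ y ∈ k,
      ((4 * Real.cos (a * Real.pi / m) ^ 2 - 4 * Real.cos (b * Real.pi / m) ^ 2 : ℝ) : ℂ) * y
        = 1 := by
  have h2k : (2 : ℂ) ∈ k := by
    have := add_mem k.one_mem k.one_mem
    rw [one_add_one_eq_two] at this
    exact this
  have hm0 : (m : ℝ) ≠ 0 := by positivity
  set θ : ℝ := 2 * Real.pi / m with hθ
  -- membership of 2cos(jθ) for all j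
  have key : ∀ j : ℕ, ((2 * Real.cos (j * θ) : ℝ) : ℂ) ∈ k := by
    have main : ∀ j : ℕ, ((2 * Real.cos (j * θ) : ℝ) : ℂ) ∈ k ∧
        ((2 * Real.cos ((j + 1 : ℕ) * θ) : ℝ) : ℂ) ∈ k := by
      intro j
      induction j with
      | zero =>
        constructor
        · norm_num
        · have h1 : ((0 + 1 : ℕ) : ℝ) * θ = 2 * Real.pi / m := by push_cast; rw [hθ]; ring
          rw [h1]; exact hcos
      | succ n ih =>
        refine ⟨ih.2, ?_⟩
        have harg : ((n + 1 + 1 : ℕ) : ℝ) * θ = ((n + 1 : ℕ) : ℝ) * θ + θ := by push_cast; ring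
        have harg2 : ((n + 1 : ℕ) : ℝ) * θ - θ = (n : ℝ) * θ := by push_cast; ring
        have hrec := two_cos_add_rec' (((n + 1 : ℕ) : ℝ) * θ) θ
        rw [harg2] at hrec
        rw [harg, hrec]
        have h1θ : ((2 * Real.cos θ : ℝ) : ℂ) ∈ k := by rw [hθ]; exact hcos
        rw [Complex.ofReal_sub, Complex.ofReal_mul]
        exact sub_mem (mul_mem h1θ ih.2) ih.1
    exact fun j => (main j).1
  set g : ℕ → ℂ := fun c => ((2 - 2 * Real.cos (c * θ) : ℝ) : ℂ) with hg
  have hgk : ∀ c, g c ∈ k := by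
    intro c
    have h1 : g c = 2 - ((2 * Real.cos (c * θ) : ℝ) : ℂ) := by rw [hg]; push_cast; ring
    rw [h1]
    exact sub_mem h2k (key c)
  set ζ : ℂ := Complex.exp (2 * Real.pi * Complex.I / m) with hζdef
  have hζ : IsPrimitiveRoot ζ m := Complex.isPrimitiveRoot_exp m (by omega)
  have hζm : ζ ^ m = 1 := hζ.pow_eq_one
  obtain ⟨n, rfl⟩ : ∃ n, m = n + 1 := ⟨m - 1, by omega⟩
  have hprod1 : ∏ c ∈ Ico 1 (n + 1), (1 - ζ ^ c) = ((n : ℂ) + 1) := by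
    rw [Finset.prod_Ico_eq_prod_range]
    simp only [Nat.add_sub_cancel]
    rw [← hζ.prod_one_sub_pow_eq_order]
    exact Finset.prod_congr rfl fun i _ => by rw [add_comm 1 i]
  -- g c = (1 - ζ^c)(1 - ζ^(m-c)) for c in Ico 1 m
  have hgfact : ∀ c ∈ Ico 1 (n + 1), g c = (1 - ζ ^ c) * (1 - ζ ^ (n + 1 - c)) := by
    intro c hc
    rw [Finset.mem_Ico] at hc
    have hcm : c ≤ n + 1 := by omega
    have hpow : ζ ^ c * ζ ^ (n + 1 - c) = 1 := by
      rw [← pow_add, Nat.add_sub_cancel' hcm, hζm]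
    have hzc : ζ ^ c = Complex.exp (((c : ℝ) * θ : ℝ) * Complex.I) := by
      rw [hζdef, ← Complex.exp_nat_mul]
      congr 1
      push_cast [hθ]
      field_simp
    have h1n : ((n : ℂ) + 1) ≠ 0 := by
      have : ((n + 1 : ℕ) : ℂ) ≠ 0 := Nat.cast_ne_zero.mpr (by omega)
      push_cast at this; exact this
    have hzc' : ζ ^ (n + 1 - c) =
        Complex.exp (2 * (Real.pi : ℂ) * Complex.I - ((c : ℝ) * θ : ℝ) * Complex.I) := by
      rw [hζdef, ← Complex.exp_nat_mul]
      congr 1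
      push_cast [Nat.cast_sub hcm, hθ]
      field_simp [h1n]
    have hzc'' : ζ ^ (n + 1 - c) = Complex.exp (-(((c : ℝ) * θ : ℝ) * Complex.I)) := by
      rw [hzc', sub_eq_add_neg, Complex.exp_add, Complex.exp_two_pi_mul_I, one_mul]
    have hexpand : (1 - ζ ^ c) * (1 - ζ ^ (n + 1 - c)) = 2 - (ζ ^ c + ζ ^ (n + 1 - c)) := by
      linear_combination hpow
    have h2cos : Complex.exp ((((c : ℝ) * θ : ℝ) : ℂ) * Complex.I)
        + Complex.exp (-((((c : ℝ) * θ : ℝ) : ℂ) * Complex.I))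
        = 2 * Complex.cos (((c : ℝ) * θ : ℝ) : ℂ) := by
      rw [Complex.two_cos, neg_mul]
    rw [hexpand, hzc, hzc'', h2cos, hg]
    push_cast [Complex.ofReal_cos]
    ring
  have hrefl : ∏ c ∈ Ico 1 (n + 1), (1 - ζ ^ (n + 1 - c)) = ∏ c ∈ Ico 1 (n + 1), (1 - ζ ^ c) := by
    have := Finset.prod_Ico_reflect (fun c => 1 - ζ ^ c) 1 (m := n + 1) (n := n + 1) (by omega)
    simpa using this
  have hprod2 : ∏ c ∈ Ico 1 (n + 1), g c = ((n : ℂ) + 1) ^ 2 := by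
    rw [Finset.prod_congr rfl hgfact, Finset.prod_mul_distrib, hrefl, hprod1]
    ring
  -- the two special indices
  have h2b : 2 * b ≤ n + 1 := by
    have := (Nat.le_div_iff_mul_le (k := 2) (by norm_num)).mp hb
    omega
  have hd1mem : b - a ∈ Ico 1 (n + 1) := by rw [Finset.mem_Ico]; omega
  have hd2mem : a + b ∈ (Ico 1 (n + 1)).erase (b - a) := by
    rw [Finset.mem_erase, Finset.mem_Ico]; omega
  set Q : ℂ := ∏ c ∈ ((Ico 1 (n + 1)).erase (b - a)).erase (a + b), g c with hQ
  have hQk : Q ∈ k := Subring.prod_mem k fun c _ => hgk c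
  have hPQ : g (b - a) * (g (a + b) * Q) = ((n : ℂ) + 1) ^ 2 := by
    rw [hQ, Finset.mul_prod_erase _ g hd2mem, Finset.mul_prod_erase _ g hd1mem, hprod2]
  -- rewrite the target element
  have hA : ((b - a : ℕ) : ℝ) * θ = (b : ℝ) * θ - (a : ℝ) * θ := by
    push_cast [Nat.cast_sub hab.le]; ring
  have hB : ((a + b : ℕ) : ℝ) * θ = (a : ℝ) * θ + (b : ℝ) * θ := by push_cast; ring
  have harga : 2 * ((a : ℝ) * Real.pi / ((n + 1 : ℕ) : ℝ)) = (a : ℝ) * θ := by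
    rw [hθ]; push_cast; ring
  have hargb : 2 * ((b : ℝ) * Real.pi / ((n + 1 : ℕ) : ℝ)) = (b : ℝ) * θ := by
    rw [hθ]; push_cast; ring
  have hxreal : (4 * Real.cos ((a : ℝ) * Real.pi / ((n + 1 : ℕ) : ℝ)) ^ 2
      - 4 * Real.cos ((b : ℝ) * Real.pi / ((n + 1 : ℕ) : ℝ)) ^ 2 : ℝ)
      = 2 * Real.cos ((a : ℝ) * θ) - 2 * Real.cos ((b : ℝ) * θ) := by
    rw [← harga, ← hargb, Real.cos_two_mul, Real.cos_two_mul]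
    ring
  have hxeq : ((4 * Real.cos (a * Real.pi / (n + 1 : ℕ)) ^ 2
      - 4 * Real.cos (b * Real.pi / (n + 1 : ℕ)) ^ 2 : ℝ) : ℂ)
      = ((2 * Real.cos ((a : ℝ) * θ) - 2 * Real.cos ((b : ℝ) * θ) : ℝ) : ℂ) := by
    exact_mod_cast congrArg Complex.ofReal hxreal
  have hmemx : ((2 * Real.cos ((a : ℝ) * θ) - 2 * Real.cos ((b : ℝ) * θ) : ℝ) : ℂ) ∈ k := by
    rw [Complex.ofReal_sub]
    exact sub_mem (key a) (key b)
  have hsqreal : (2 * Real.cos ((a : ℝ) * θ) - 2 * Real.cos ((b : ℝ) * θ)) ^ 2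
      = (2 - 2 * Real.cos (((b - a : ℕ) : ℝ) * θ)) * (2 - 2 * Real.cos (((a + b : ℕ) : ℝ) * θ)) := by
    rw [hA, hB]
    exact two_cos_diff_sq' _ _
  have hsq : (((2 * Real.cos ((a : ℝ) * θ) - 2 * Real.cos ((b : ℝ) * θ) : ℝ)) : ℂ) ^ 2
      = g (b - a) * (g (a + b)) := by
    simp only [hg]
    exact_mod_cast congrArg Complex.ofReal hsqreal
  set X : ℂ := ((2 * Real.cos ((a : ℝ) * θ) - 2 * Real.cos ((b : ℝ) * θ) : ℝ) : ℂ) with hX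
  have hXXQ : X * X * Q = ((n : ℂ) + 1) ^ 2 := by
    rw [← sq, hsq, mul_assoc]
    exact hPQ
  have hN0 : ((n + 1 : ℕ) : ℂ) ≠ 0 := Nat.cast_ne_zero.mpr (by omega)
  constructor
  · rw [hxeq]; exact hmemx
  · refine ⟨X * Q * ((n + 1 : ℕ) : ℂ)⁻¹ * ((n + 1 : ℕ) : ℂ)⁻¹,
      mul_mem (mul_mem (mul_mem hmemx hQk) hinv) hinv, ?_⟩
    rw [hxeq]
    have : X * (X * Q * ((n + 1 : ℕ) : ℂ)⁻¹ * ((n + 1 : ℕ) : ℂ)⁻¹)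
        = (X * X * Q) * (((n + 1 : ℕ) : ℂ)⁻¹ * ((n + 1 : ℕ) : ℂ)⁻¹) := by ring
    rw [this, hXXQ]
    have h1n' : ((n : ℂ) + 1) ≠ 0 := by push_cast at hN0; exact hN0
    push_cast
    field_simp
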